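/- arXiv:1103.2076 — 5 statements merged into one kernel-verified Lean document; each statement's English description precedes it below -/
import Mathlib

section
/- The matrix B = [[2cos(π/n), 1],[-1, 0]] satisfies B^n = -Id (so B has order n in PSL₂(ℝ)). -/
open Real

theorem stmt_4 (n : ℕ) (hn : 4 ≤ n)
    (B : Matrix (Fin 2) (Fin 2) ℝ)
    (hB : B = !![2 * Real.cos (Real.pi / n), 1; -1, 0]) :
    B ^ n = -(1 : Matrix (Fin 2) (Fin 2) ℝ) := by
  have hn0 : (0:ℝ) < n := by positivity
  have hn2 : (2:ℝ) ≤ n := by exact_mod_cast (by omega : 2 ≤ n)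
  set θ : ℝ := Real.pi / n with hθ
  have hθpos : 0 < θ := div_pos Real.pi_pos hn0
  have hθlt : θ < Real.pi := by
    rw [hθ, div_lt_iff₀ hn0]
    nlinarith [Real.pi_pos]
  clear_value θ
  have hsin : Real.sin θ ≠ 0 := ne_of_gt (Real.sin_pos_of_pos_of_lt_pi hθpos hθlt)
  have key : ∀ k : ℕ, 1 ≤ k → Real.sin θ • B ^ k =
      !![Real.sin ((k+1)*θ), Real.sin (k*θ); -Real.sin (k*θ), -Real.sin ((k-1)*θ)] := by
    intro k hk
    induction k with
    | zero => omega
    | succ m ih =>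
      rcases Nat.eq_or_lt_of_le hk with h1 | h1
      · have hm : m = 0 := by omega
        subst hm
        rw [hB, pow_one]
        ext i j
        fin_cases i <;> fin_cases j <;>
          norm_num [Matrix.smul_apply, Real.sin_two_mul] <;> ring
      · have hm : 1 ≤ m := by omega
        have ih' := ih hm
        have hstep : Real.sin θ • B ^ (m+1) = (Real.sin θ • B ^ m) * B := by
          rw [pow_succ, Matrix.smul_mul]
        rw [hstep, ih', hB]
        have e1 : Real.sin (((m:ℝ)+1+1)*θ) =
            Real.sin (((m:ℝ)+1)*θ) * (2 * Real.cos θ) - Real.sin ((m:ℝ)*θ) := by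
          have h2 : Real.sin (((m:ℝ)+1)*θ + θ) + Real.sin (((m:ℝ)+1)*θ - θ) =
              2 * Real.sin (((m:ℝ)+1)*θ) * Real.cos θ := by
            rw [Real.sin_add, Real.sin_sub]; ring
          have h3 : ((m:ℝ)+1+1)*θ = ((m:ℝ)+1)*θ + θ := by ring
          have h4 : ((m:ℝ)+1)*θ - θ = (m:ℝ)*θ := by ring
          rw [h3]; rw [h4] at h2; linarith
        have e2 : Real.sin (((m:ℝ)+1)*θ) =
            Real.sin ((m:ℝ)*θ) * (2 * Real.cos θ) - Real.sin (((m:ℝ)-1)*θ) := by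
          have h2 : Real.sin ((m:ℝ)*θ + θ) + Real.sin ((m:ℝ)*θ - θ) =
              2 * Real.sin ((m:ℝ)*θ) * Real.cos θ := by
            rw [Real.sin_add, Real.sin_sub]; ring
          have h3 : ((m:ℝ)+1)*θ = (m:ℝ)*θ + θ := by ring
          have h4 : ((m:ℝ)-1)*θ = (m:ℝ)*θ - θ := by ring
          rw [h3, h4]; linarith
        ext i j
        fin_cases i <;> fin_cases j
        · simp [Matrix.mul_apply, Fin.sum_univ_two]
          push_cast
          linear_combination -e1
        · simp [Matrix.mul_apply, Fin.sum_univ_two]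
        · simp [Matrix.mul_apply, Fin.sum_univ_two]
          push_cast
          linear_combination e2
        · simp [Matrix.mul_apply, Fin.sum_univ_two]
  have hkey := key n (by omega)
  have hn1 : Real.sin (((n:ℝ)+1)*θ) = -Real.sin θ := by
    have h : ((n:ℝ)+1)*θ = Real.pi + θ := by rw [hθ]; field_simp
    rw [h, Real.sin_add]; simp
  have hn2' : Real.sin ((n:ℝ)*θ) = 0 := by
    have h : (n:ℝ)*θ = Real.pi := by rw [hθ]; field_simp
    rw [h, Real.sin_pi]
  have hn3 : Real.sin (((n:ℝ)-1)*θ) = Real.sin θ := by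
    have h : ((n:ℝ)-1)*θ = Real.pi - θ := by rw [hθ]; field_simp
    rw [h, Real.sin_pi_sub]
  rw [hn1, hn2', hn3] at hkey
  have hfin : Real.sin θ • B ^ n = Real.sin θ • (-(1 : Matrix (Fin 2) (Fin 2) ℝ)) := by
    rw [hkey]
    ext i j
    fin_cases i <;> fin_cases j <;> simp [Matrix.smul_apply]
  exact smul_right_injective _ hsin hfin
end

section
/- With τ = 1 + 2cos(π/n), the matrix W = A⁻¹B⁻²A⁻¹B⁻¹ equals [[τ²+1, τ³],[-τ, -τ²+1]]; in particular W is parabolic (trace 2, determinant 1) and its Möbius action fixes -τ. -/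
/-- Möbius action of a 2×2 real matrix on a real number. -/
noncomputable def moebius (M : Matrix (Fin 2) (Fin 2) ℝ) (x : ℝ) : ℝ :=
  (M 0 0 * x + M 0 1) / (M 1 0 * x + M 1 1)

theorem stmt_5 (n : ℕ) (hn : 4 ≤ n) (τ : ℝ) (hτ : τ = 1 + 2 * Real.cos (Real.pi / n))
    (A B W : Matrix (Fin 2) (Fin 2) ℝ)
    (hA : A = !![1, τ; 0, 1])
    (hB : B = !![2 * Real.cos (Real.pi / n), 1; -1, 0])
    (hW : W = A⁻¹ * (B⁻¹ * B⁻¹) * A⁻¹ * B⁻¹) :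
    W = !![τ ^ 2 + 1, τ ^ 3; -τ, -τ ^ 2 + 1] ∧
      Matrix.trace W = 2 ∧ Matrix.det W = 1 ∧ moebius W (-τ) = -τ := by
  have hc : 2 * Real.cos (Real.pi / n) = τ - 1 := by rw [hτ]; ring
  rw [hc] at hB
  have hAinv : A⁻¹ = !![1, -τ; 0, 1] := by
    apply Matrix.inv_eq_right_inv
    rw [hA]
    ext i j
    fin_cases i <;> fin_cases j <;>
      simp [Matrix.mul_apply, Fin.sum_univ_succ] <;> ring
  have hBinv : B⁻¹ = !![0, -1; 1, τ - 1] := by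
    apply Matrix.inv_eq_right_inv
    rw [hB]
    ext i j
    fin_cases i <;> fin_cases j <;>
      simp [Matrix.mul_apply, Fin.sum_univ_succ] <;> ring
  have hW' : W = !![τ ^ 2 + 1, τ ^ 3; -τ, -τ ^ 2 + 1] := by
    rw [hW, hAinv, hBinv]
    ext i j
    fin_cases i <;> fin_cases j <;>
      simp [Matrix.mul_apply, Fin.sum_univ_succ] <;> ring
  refine ⟨hW', ?_, ?_, ?_⟩
  · rw [hW']
    simp [Matrix.trace_fin_two]
    ring
  · rw [hW']
    simp [Matrix.det_fin_two]
    ring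
  · rw [hW']
    show ((τ ^ 2 + 1) * -τ + τ ^ 3) / (-τ * -τ + (-τ ^ 2 + 1)) = -τ
    have hden : -τ * -τ + (-τ ^ 2 + 1) = 1 := by ring
    rw [hden, div_one]
    ring
end

section
/- For n even, n ≥ 4, with B = [[2cos(π/n), 1],[-1, 0]] and τ = 1 + 2cos(π/n): the Möbius actions satisfy B^(n/2)·(-τ) = -τ + 2 and B·(-1) = -τ + 2; consequently B^(n/2 - 1)·(-τ) = -1. -/
open Real

lemma tri (x θ : ℝ) : sin (x + θ) = 2 * cos θ * sin x - sin (x - θ) := by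
  rw [sin_add, sin_sub]; ring

lemma Bpow (θ : ℝ) (hs : Real.sin θ ≠ 0) (k : ℕ) :
    (!![2 * Real.cos θ, 1; -1, 0] : Matrix (Fin 2) (Fin 2) ℝ) ^ (k + 1) =
    !![Real.sin (((k:ℝ)+2)*θ)/Real.sin θ, Real.sin (((k:ℝ)+1)*θ)/Real.sin θ;
       -(Real.sin (((k:ℝ)+1)*θ)/Real.sin θ), -(Real.sin ((k:ℝ)*θ)/Real.sin θ)] := by
  induction k with
  | zero =>
    simp only [Nat.cast_zero, zero_add, pow_one, one_mul, zero_mul, Real.sin_zero]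
    rw [Real.sin_two_mul θ]
    ext i j
    fin_cases i <;> fin_cases j <;>
      simp [Matrix.cons_val_zero, Matrix.cons_val_one] <;> field_simp <;> ring
  | succ k ih =>
    rw [pow_succ, ih]
    ext i j
    fin_cases i <;> fin_cases j <;>
      simp [Matrix.mul_apply, Fin.sum_univ_two, Matrix.cons_val_zero, Matrix.cons_val_one] <;>
      push_cast
    · rw [show ((k:ℝ)+1+2)*θ = ((k:ℝ)+2)*θ + θ by ring, tri (((k:ℝ)+2)*θ) θ,
        show ((k:ℝ)+2)*θ - θ = ((k:ℝ)+1)*θ by ring]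
      ring
    · ring_nf
    · rw [show ((k:ℝ)+1+1)*θ = ((k:ℝ)+1)*θ + θ by ring, tri (((k:ℝ)+1)*θ) θ,
        show ((k:ℝ)+1)*θ - θ = (k:ℝ)*θ by ring]
      ring

theorem stmt_8 (n : ℕ) (hn : 4 ≤ n) (hneven : Even n)
    (τ : ℝ) (hτ : τ = 1 + 2 * Real.cos (Real.pi / n))
    (B : Matrix (Fin 2) (Fin 2) ℝ)
    (hB : B = !![2 * Real.cos (Real.pi / n), 1; -1, 0]) :
    moebius (B ^ (n / 2)) (-τ) = -τ + 2 ∧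
    moebius B (-1) = -τ + 2 ∧
    moebius (B ^ (n / 2 - 1)) (-τ) = -1 := by
  set θ : ℝ := Real.pi / n with hθ
  have hn0 : (0:ℝ) < n := by positivity
  have hθpos : 0 < θ := by positivity
  have hθlt : θ < π / 2 := by
    rw [hθ, div_lt_div_iff₀ hn0 two_pos]
    have h2n : (2:ℝ) < n := by exact_mod_cast (by omega : 2 < n)
    nlinarith [Real.pi_pos, h2n]
  have hθltpi : θ < π := lt_trans hθlt (by linarith [Real.pi_pos])
  have hs : Real.sin θ ≠ 0 := ne_of_gt (Real.sin_pos_of_pos_of_lt_pi hθpos hθltpi)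
  have hc : 0 < Real.cos θ := Real.cos_pos_of_mem_Ioo ⟨by linarith, hθlt⟩
  obtain ⟨m, hm⟩ := hneven
  have hm2 : 2 ≤ m := by omega
  obtain ⟨m', hm'⟩ : ∃ m', m = m' + 2 := ⟨m - 2, by omega⟩
  have hdiv : n / 2 = m' + 2 := by omega
  have hdiv1 : n / 2 - 1 = m' + 1 := by omega
  have hnm : (n:ℝ) = 2 * m' + 4 := by
    have : n = 2 * m' + 4 := by omega
    exact_mod_cast this
  have hmθ : ((m':ℝ) + 2) * θ = π / 2 := by
    rw [hθ, hnm]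
    field_simp
    ring
  -- sin/cos values
  have e1 : Real.sin (((m':ℝ) + 2) * θ) = 1 := by rw [hmθ, Real.sin_pi_div_two]
  have e2 : Real.sin (((m':ℝ) + 1 + 2) * θ) = Real.cos θ := by
    rw [show ((m':ℝ) + 1 + 2) * θ = π/2 + θ by rw [← hmθ]; ring, Real.sin_add]
    simp
  have e3 : Real.sin (((m':ℝ) + 1) * θ) = Real.cos θ := by
    rw [show ((m':ℝ) + 1) * θ = π/2 - θ by rw [← hmθ]; ring, Real.sin_pi_div_two_sub]
  have e4 : Real.sin ((m':ℝ) * θ) = Real.cos (2 * θ) := by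
    rw [show ((m':ℝ)) * θ = π/2 - 2*θ by rw [← hmθ]; ring, Real.sin_pi_div_two_sub]
  have e2' : Real.sin (((m':ℝ) + 1 + 1) * θ) = 1 := by
    rw [show ((m':ℝ) + 1 + 1) * θ = ((m':ℝ) + 2) * θ by ring]; exact e1
  refine ⟨?_, ?_, ?_⟩
  · rw [hB, hdiv, show m' + 2 = (m' + 1) + 1 by ring, Bpow θ hs (m' + 1), moebius]
    push_cast
    simp only [Matrix.cons_val', Matrix.cons_val_zero, Matrix.cons_val_one, Matrix.head_cons, Matrix.head_fin_const, Matrix.empty_val', Matrix.cons_val_fin_one, Matrix.of_apply]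
    rw [e2', e2, e3]
    have hden : -(1 / Real.sin θ) * (-τ) + -(Real.cos θ / Real.sin θ) ≠ 0 := by
      rw [hτ]
      have : -(1 / Real.sin θ) * (-(1 + 2 * Real.cos θ)) + -(Real.cos θ / Real.sin θ)
          = (1 + Real.cos θ) / Real.sin θ := by field_simp; ring
      rw [this]
      positivity
    rw [div_eq_iff hden, hτ]
    field_simp
    ring
  · rw [hB, moebius, hτ]
    norm_num
    ring
  · rw [hB, hdiv1, Bpow θ hs m', moebius]
    push_cast
    simp only [Matrix.cons_val', Matrix.cons_val_zero, Matrix.cons_val_one, Matrix.head_cons, Matrix.head_fin_const, Matrix.empty_val', Matrix.cons_val_fin_one, Matrix.of_apply]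
    rw [e1, e3, e4]
    have hden : -(Real.cos θ / Real.sin θ) * (-τ) + -(Real.cos (2*θ) / Real.sin θ) ≠ 0 := by
      rw [hτ, Real.cos_two_mul]
      have : -(Real.cos θ / Real.sin θ) * (-(1 + 2 * Real.cos θ))
            + -((2 * Real.cos θ ^ 2 - 1) / Real.sin θ)
          = (1 + Real.cos θ) / Real.sin θ := by field_simp; ring
      rw [this]
      positivity
    rw [div_eq_iff hden, hτ, Real.cos_two_mul]
    field_simp
    ring
end

section
/- For n = 2m+3 with m ≥ 1 (so n ≥ 5 odd), writing τ = 1 + 2cos(π/n) and B = [[2cos(π/n),1],[-1,0]], the Möbius action satisfies B^m·(1 - τ) = -1. Equivalently, (-2cos(π/n)·sin((m+1)π/n) + sin(mπ/n)) / (2cos(π/n)·sin(mπ/n) - sin((m-1)π/n)) = -1. -/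
lemma sin_rec (θ x : ℝ) :
    Real.sin (x + θ) = 2 * Real.cos θ * Real.sin x - Real.sin (x - θ) := by
  rw [Real.sin_add, Real.sin_sub]; ring

lemma pow_aux (θ : ℝ) (hs : Real.sin θ ≠ 0) (k : ℕ) :
    (!![2 * Real.cos θ, 1; -1, 0] : Matrix (Fin 2) (Fin 2) ℝ) ^ (k + 1) =
      !![Real.sin ((k + 2) * θ) / Real.sin θ, Real.sin ((k + 1) * θ) / Real.sin θ;
         -(Real.sin ((k + 1) * θ) / Real.sin θ), -(Real.sin ((k : ℝ) * θ) / Real.sin θ)] := by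
  induction k with
  | zero =>
      rw [pow_one]
      have h : Real.sin (2 * θ) / Real.sin θ = 2 * Real.cos θ := by
        rw [Real.sin_two_mul]; field_simp
      norm_num
      rw [h]
      norm_num [div_self hs]
  | succ k ih =>
      rw [pow_succ, ih, Matrix.mul_fin_two]
      have hc : ((k + 1 : ℕ) : ℝ) = (k : ℝ) + 1 := by push_cast; ring
      rw [hc]
      have hA : Real.sin (((k : ℝ) + 2) * θ) / Real.sin θ * (2 * Real.cos θ) +
          Real.sin (((k : ℝ) + 1) * θ) / Real.sin θ * (-1) =
          Real.sin (((k : ℝ) + 1 + 2) * θ) / Real.sin θ := by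
        rw [show ((k : ℝ) + 1 + 2) * θ = ((k : ℝ) + 2) * θ + θ by ring, sin_rec,
          show ((k : ℝ) + 2) * θ - θ = ((k : ℝ) + 1) * θ by ring]
        ring
      have hB : Real.sin (((k : ℝ) + 2) * θ) / Real.sin θ * 1 +
          Real.sin (((k : ℝ) + 1) * θ) / Real.sin θ * 0 =
          Real.sin (((k : ℝ) + 1 + 1) * θ) / Real.sin θ := by
        rw [show ((k : ℝ) + 1 + 1) * θ = ((k : ℝ) + 2) * θ by ring]; ring
      have hC : -(Real.sin (((k : ℝ) + 1) * θ) / Real.sin θ) * (2 * Real.cos θ) +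
          -(Real.sin ((k : ℝ) * θ) / Real.sin θ) * (-1) =
          -(Real.sin (((k : ℝ) + 1 + 1) * θ) / Real.sin θ) := by
        rw [show ((k : ℝ) + 1 + 1) * θ = ((k : ℝ) + 1) * θ + θ by ring, sin_rec,
          show ((k : ℝ) + 1) * θ - θ = (k : ℝ) * θ by ring]
        ring
      have hD : -(Real.sin (((k : ℝ) + 1) * θ) / Real.sin θ) * 1 +
          -(Real.sin ((k : ℝ) * θ) / Real.sin θ) * 0 =
          -(Real.sin (((k : ℝ) + 1) * θ) / Real.sin θ) := by ring
      rw [hA, hB, hC, hD]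

theorem stmt_10 (m : ℕ) (hm : 1 ≤ m) (n : ℕ) (hn : n = 2 * m + 3)
    (τ : ℝ) (hτ : τ = 1 + 2 * Real.cos (Real.pi / n))
    (B : Matrix (Fin 2) (Fin 2) ℝ)
    (hB : B = !![2 * Real.cos (Real.pi / n), 1; -1, 0]) :
    moebius (B ^ m) (1 - τ) = -1 ∧
    (-(2 * Real.cos (Real.pi / n)) * Real.sin ((m + 1) * Real.pi / n)
        + Real.sin (m * Real.pi / n)) /
      (2 * Real.cos (Real.pi / n) * Real.sin (m * Real.pi / n)
        - Real.sin ((m - 1 : ℝ) * Real.pi / n)) = -1 := by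
  subst hn hτ hB
  obtain ⟨j, rfl⟩ : ∃ j, m = j + 1 := ⟨m - 1, by omega⟩
  set θ : ℝ := Real.pi / ((2 * (j + 1) + 3 : ℕ) : ℝ) with hθ
  have hnpos : (0 : ℝ) < ((2 * (j + 1) + 3 : ℕ) : ℝ) := by positivity
  have hθpos : 0 < θ := by positivity
  have hnθ : ((2 * (j + 1) + 3 : ℕ) : ℝ) * θ = Real.pi := by
    rw [hθ]; field_simp
  have hsinpos : ∀ k : ℕ, 1 ≤ k → k ≤ 2 * j + 4 → 0 < Real.sin ((k : ℝ) * θ) := by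
    intro k hk1 hk2
    apply Real.sin_pos_of_pos_of_lt_pi
    · have h1 : (1 : ℝ) ≤ (k : ℝ) := by exact_mod_cast hk1
      nlinarith
    · have hk : (k : ℝ) < ((2 * (j + 1) + 3 : ℕ) : ℝ) := by
        have h2 : (k : ℝ) ≤ 2 * (j : ℝ) + 4 := by exact_mod_cast hk2
        push_cast; linarith
      calc (k : ℝ) * θ < ((2 * (j + 1) + 3 : ℕ) : ℝ) * θ :=
            mul_lt_mul_of_pos_right hk hθpos
        _ = Real.pi := hnθ
  have hs1 : 0 < Real.sin θ := by
    have h := hsinpos 1 le_rfl (by omega)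
    simpa using h
  have hs1' : Real.sin θ ≠ 0 := ne_of_gt hs1
  have hj2 : 0 < Real.sin (((j : ℝ) + 2) * θ) := by
    have h := hsinpos (j + 2) (by omega) (by omega)
    push_cast at h; exact h
  have hflip : Real.sin (((j : ℝ) + 3) * θ) = Real.sin (((j : ℝ) + 2) * θ) := by
    have h : ((j : ℝ) + 3) * θ = Real.pi - ((j : ℝ) + 2) * θ := by
      rw [← hnθ]; push_cast; ring
    rw [h, Real.sin_pi_sub]
  have e3 : Real.sin (((j : ℝ) + 3) * θ) =
      2 * Real.cos θ * Real.sin (((j : ℝ) + 2) * θ) - Real.sin (((j : ℝ) + 1) * θ) := by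
    have h := sin_rec θ (((j : ℝ) + 2) * θ)
    rw [show ((j : ℝ) + 3) * θ = ((j : ℝ) + 2) * θ + θ by ring, h,
      show ((j : ℝ) + 2) * θ - θ = ((j : ℝ) + 1) * θ by ring]
  have e4 : Real.sin (((j : ℝ) + 2) * θ) =
      2 * Real.cos θ * Real.sin (((j : ℝ) + 1) * θ) - Real.sin ((j : ℝ) * θ) := by
    have h := sin_rec θ (((j : ℝ) + 1) * θ)
    rw [show ((j : ℝ) + 2) * θ = ((j : ℝ) + 1) * θ + θ by ring, h,
      show ((j : ℝ) + 1) * θ - θ = (j : ℝ) * θ by ring]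
  have main : ∀ x y : ℝ, y ≠ 0 → x = -y → x / y = -1 := by
    intro x y hy hxy; rw [hxy, neg_div, div_self hy]
  constructor
  · rw [pow_aux θ hs1' j, moebius]
    simp only [Matrix.cons_val', Matrix.cons_val_zero, Matrix.cons_val_one, Matrix.head_cons,
      Matrix.empty_val', Matrix.cons_val_fin_one, Matrix.head_fin_const, Matrix.of_apply,
      Fin.isValue]
    have hden : -(Real.sin (((j : ℝ) + 1) * θ) / Real.sin θ) * (1 - (1 + 2 * Real.cos θ)) +
        -(Real.sin ((j : ℝ) * θ) / Real.sin θ) = Real.sin (((j : ℝ) + 2) * θ) / Real.sin θ := by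
      rw [e4]; ring
    apply main
    · rw [hden]; exact ne_of_gt (div_pos hj2 hs1)
    · rw [hden]
      have hnum : -(2 * Real.cos θ) * Real.sin (((j : ℝ) + 2) * θ) +
          Real.sin (((j : ℝ) + 1) * θ) = -Real.sin (((j : ℝ) + 2) * θ) := by
        linarith [e3, hflip]
      linear_combination hnum / Real.sin θ
  · have harg1 : ((j : ℝ) + 1 + 1) * Real.pi / (2 * ((j : ℝ) + 1) + 3) =
        ((j : ℝ) + 2) * θ := by rw [hθ]; push_cast; ring
    have harg2 : ((j : ℝ) + 1) * Real.pi / (2 * ((j : ℝ) + 1) + 3) =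
        ((j : ℝ) + 1) * θ := by rw [hθ]; push_cast; ring
    have harg3 : ((j : ℝ) + 1 - 1) * Real.pi / (2 * ((j : ℝ) + 1) + 3) =
        (j : ℝ) * θ := by rw [hθ]; push_cast; ring
    push_cast
    rw [harg1, harg2, harg3]
    apply main
    · rw [← e4]; exact ne_of_gt hj2
    · linarith [e3, e4, hflip]
end

section
/- For n = 2m+3 odd, n ≥ 5, B^(n-2)·(-τ) = -1/τ, where B = [[2cos(π/n),1],[-1,0]] acts by Möbius transformations and τ = 1 + 2cos(π/n). (Indeed B^(n-2) acts as B⁻² projectively and B⁻² = [[-1, 1-τ],[τ-1, (1-τ)²-1]] up to sign.) -/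
theorem stmt_11 (n : ℕ) (hn : 5 ≤ n) (hodd : Odd n)
    (τ : ℝ) (hτ : τ = 1 + 2 * Real.cos (Real.pi / n))
    (B : Matrix (Fin 2) (Fin 2) ℝ)
    (hB : B = !![2 * Real.cos (Real.pi / n), 1; -1, 0]) :
    moebius (B ^ (n - 2)) (-τ) = -1 / τ := by
  have hn0 : (0:ℝ) < n := by
    have : (0:ℕ) < n := by omega
    exact_mod_cast this
  obtain ⟨θ, hθdef⟩ : ∃ θ : ℝ, θ = Real.pi / n := ⟨_, rfl⟩
  rw [← hθdef] at hτ hB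
  have hθpos : 0 < θ := hθdef ▸ div_pos Real.pi_pos hn0
  have hθlt : θ < Real.pi := by
    rw [hθdef]
    exact div_lt_self Real.pi_pos (by exact_mod_cast (by omega : (1:ℕ) < n))
  have hs : Real.sin θ ≠ 0 := ne_of_gt (Real.sin_pos_of_pos_of_lt_pi hθpos hθlt)
  obtain ⟨s, hsdef⟩ : ∃ s : ℝ, s = Real.sin θ := ⟨_, rfl⟩
  rw [← hsdef] at hs
  have hpyth : s^2 + Real.cos θ^2 = 1 := by rw [hsdef]; exact Real.sin_sq_add_cos_sq θ
  have key : ∀ k : ℕ, B ^ k =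
      !![Real.sin (((k:ℝ)+1)*θ)/s, Real.sin ((k:ℝ)*θ)/s;
        -(Real.sin ((k:ℝ)*θ)/s), -(Real.sin (((k:ℝ)-1)*θ)/s)] := by
    intro k
    induction k with
    | zero =>
      rw [pow_zero, Matrix.one_fin_two]
      simp only [Nat.cast_zero, zero_add, one_mul, zero_mul, Real.sin_zero, zero_div,
        neg_zero, zero_sub, neg_one_mul, Real.sin_neg, neg_div, neg_neg, ← hsdef,
        div_self hs]
    | succ k ih =>
      have h00 : Real.sin (((k:ℝ)+1)*θ)/s * (2*Real.cos θ) + Real.sin ((k:ℝ)*θ)/s * (-1)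
          = Real.sin (((k:ℝ)+1+1)*θ)/s := by
        rw [show ((k:ℝ)+1+1)*θ = (((k:ℝ)*θ)+θ)+θ by ring, Real.sin_add,
          show ((k:ℝ)+1)*θ = (k:ℝ)*θ+θ by ring, Real.sin_add, Real.cos_add, ← hsdef]
        field_simp
        linear_combination Real.sin ((k:ℝ)*θ) * hpyth
      have h01 : Real.sin (((k:ℝ)+1)*θ)/s * 1 + Real.sin ((k:ℝ)*θ)/s * 0
          = Real.sin (((k:ℝ)+1)*θ)/s := by ring
      have h10 : -(Real.sin ((k:ℝ)*θ)/s) * (2*Real.cos θ) + -(Real.sin (((k:ℝ)-1)*θ)/s) * (-1)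
          = -(Real.sin (((k:ℝ)+1)*θ)/s) := by
        rw [show ((k:ℝ)+1)*θ = (k:ℝ)*θ+θ by ring, Real.sin_add,
          show ((k:ℝ)-1)*θ = (k:ℝ)*θ-θ by ring, Real.sin_sub, ← hsdef]
        field_simp
        ring
      have h11 : -(Real.sin ((k:ℝ)*θ)/s) * 1 + -(Real.sin (((k:ℝ)-1)*θ)/s) * 0
          = -(Real.sin (((k:ℝ)+1-1)*θ)/s) := by
        rw [show ((k:ℝ)+1-1)*θ = (k:ℝ)*θ by ring]
        ring
      rw [pow_succ, ih, hB, Matrix.mul_fin_two]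
      push_cast
      rw [h00, h01, h10, h11]
  have hcast : ((n - 2 : ℕ) : ℝ) = (n:ℝ) - 2 := by
    have : (2:ℕ) ≤ n := by omega
    push_cast [this]; ring
  rw [key (n-2), hcast]
  have hne : (n:ℝ) ≠ 0 := ne_of_gt hn0
  have a1 : ((n:ℝ)-2+1)*θ = Real.pi - θ := by rw [hθdef]; field_simp; ring
  have a2 : ((n:ℝ)-2)*θ = Real.pi - 2*θ := by rw [hθdef]; field_simp
  have a3 : ((n:ℝ)-2-1)*θ = Real.pi - 3*θ := by rw [hθdef]; field_simp; ring
  rw [a1, a2, a3, Real.sin_pi_sub, Real.sin_pi_sub, Real.sin_pi_sub]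
  have hsin2 : Real.sin (2*θ) = 2 * s * Real.cos θ := by rw [Real.sin_two_mul, hsdef]
  have hsin3 : Real.sin (3*θ) = 3 * s - 4 * s^3 := by rw [Real.sin_three_mul, hsdef]
  simp only [moebius, Matrix.of_apply, Matrix.cons_val', Matrix.cons_val_zero,
    Matrix.cons_val_one, Matrix.head_cons, Matrix.empty_val',
    Matrix.cons_val_fin_one, Matrix.head_fin_const, ← hsdef]
  have hnum : s/s * (-τ) + Real.sin (2*θ)/s = -1 := by
    rw [div_self hs, hsin2, hτ]
    field_simp
    ring
  have hden : -(Real.sin (2*θ)/s) * (-τ) + -(Real.sin (3*θ)/s) = τ := by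
    rw [hsin2, hsin3, hτ]
    field_simp
    nlinarith [hpyth]
  rw [hnum, hden]
end
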